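/- Let Ω ⊂ ℝ^N be open and bounded, K ⊂ ℝ^N compact convex with 0 ∈ int K, ρ its gauge, and ρ⁰ the gauge of the polar set K⁰. A Lipschitz function u on Ω satisfies Du ∈ K a.e. in Ω if and only if u(x) − u(y) ≤ ρ⁰(x − y) for every pair x, y ∈ Ω joined by a segment contained in Ω. -/

import Mathlib

open MeasureTheory Set RealInnerProductSpace

open scoped NNReal
/-- The polar set `K⁰ = {p : ⟪p,x⟫ ≤ 1 ∀ x ∈ K}`. -/
def polarSet {N : ℕ} (K : Set (EuclideanSpace ℝ (Fin N))) : Set (EuclideanSpace ℝ (Fin N)) :=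
  {p | ∀ x ∈ K, ⟪p, x⟫ ≤ 1}

open Metric in
theorem conv_hasFDerivAt {N : ℕ} (φ : ContDiffBump (0 : EuclideanSpace ℝ (Fin N)))
    (f : EuclideanSpace ℝ (Fin N) → ℝ) (C : ℝ≥0) (hf : LipschitzWith C f)
    (x₀ : EuclideanSpace ℝ (Fin N)) :
    Integrable (fun s => φ.normed volume s • fderiv ℝ f (x₀ - s)) volume ∧
    HasFDerivAt (fun z => ∫ s, φ.normed volume s • f (z - s))
      (∫ s, φ.normed volume s • fderiv ℝ f (x₀ - s)) x₀ := by
  have hφc : Continuous (φ.normed volume) := φ.continuous_normed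
  have hfc : Continuous f := hf.continuous
  have hlip : ∀ s, LipschitzWith (C * ‖φ.normed volume s‖₊)
      (fun x => φ.normed volume s • f (x - s)) := by
    intro s
    have l1 : LipschitzWith C (fun x => f (x - s)) := by
      have : LipschitzWith 1 (fun x : EuclideanSpace ℝ (Fin N) => x - s) :=
        LipschitzWith.of_dist_le_mul fun a b => by rw [dist_sub_right]; simp
      simpa [Function.comp_def] using hf.comp this
    simpa [mul_comm, Function.comp_def] using (lipschitzWith_smul (α := ℝ) (φ.normed volume s)).comp l1
  refine hasFDerivAt_integral_of_dominated_loc_of_lip (s := Metric.ball x₀ 1)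
    (bound := fun s => (C : ℝ) * φ.normed volume s) (Metric.ball_mem_nhds x₀ one_pos) ?_ ?_ ?_ ?_ ?_ ?_
  · filter_upwards with x
    exact Continuous.aestronglyMeasurable (by fun_prop)
  · apply Continuous.integrable_of_hasCompactSupport (by fun_prop)
    exact φ.hasCompactSupport_normed.smul_right
  · refine (StronglyMeasurable.aestronglyMeasurable ?_)
    exact (hφc.stronglyMeasurable.smul
      (((measurable_fderiv ℝ f).comp (measurable_const.sub measurable_id)).stronglyMeasurable))
  · filter_upwards with s
    refine ((hlip s).weaken ?_).lipschitzOnWith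
    have h1 : 0 ≤ φ.normed volume s := φ.nonneg_normed s
    rw [← NNReal.coe_le_coe]
    push_cast
    rw [Real.norm_eq_abs, abs_of_nonneg h1, abs_of_nonneg (mul_nonneg C.coe_nonneg h1)]
  · exact (φ.integrable_normed).const_mul _
  · have h1 := hf.ae_differentiableAt (μ := (volume : Measure (EuclideanSpace ℝ (Fin N))))
    have h2 := (Measure.measurePreserving_sub_left volume x₀).quasiMeasurePreserving.ae h1
    filter_upwards [h2] with s hs
    have h3 : HasFDerivAt (fun x => f (x - s)) (fderiv ℝ f (x₀ - s)) x₀ := by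
      have := (hs.hasFDerivAt).comp x₀ ((hasFDerivAt_id x₀).sub_const s)
      simpa [Function.comp_def] using this
    exact h3.const_smul (φ.normed volume s)

theorem inner_le_gauge_polar {N : ℕ} (K : Set (EuclideanSpace ℝ (Fin N)))
    (hK : Bornology.IsBounded K) {p : EuclideanSpace ℝ (Fin N)} (hp : p ∈ K)
    (w : EuclideanSpace ℝ (Fin N)) : ⟪p, w⟫ ≤ gauge (polarSet K) w := by
  obtain ⟨R, hR⟩ : ∃ R, ∀ x ∈ K, ‖x‖ ≤ R := by
    have hK' : Bornology.IsBounded K := hK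
    exact isBounded_iff_forall_norm_le.mp hK'
  set R' : ℝ := max R 1 with hR'
  have hR'1 : 1 ≤ R' := le_max_right _ _
  have hR'pos : 0 < R' := lt_of_lt_of_le one_pos hR'1
  have hRle : ∀ x ∈ K, ‖x‖ ≤ R' := fun x hx => (hR x hx).trans (le_max_left _ _)
  rw [gauge]
  apply le_csInf
  · refine ⟨R' * ‖w‖ + 1, ?_, ?_⟩
    · positivity
    · have hr0 : (R' * ‖w‖ + 1) ≠ 0 := by positivity
      rw [Set.mem_smul_set_iff_inv_smul_mem₀ hr0]
      intro x hx
      have h1 : ⟪(R' * ‖w‖ + 1)⁻¹ • w, x⟫ = (R' * ‖w‖ + 1)⁻¹ * ⟪w, x⟫ :=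
        real_inner_smul_left _ _ _
      rw [h1]
      have h2 : ⟪w, x⟫ ≤ ‖w‖ * ‖x‖ := real_inner_le_norm _ _
      have h3 : ‖w‖ * ‖x‖ ≤ ‖w‖ * R' := by
        apply mul_le_mul_of_nonneg_left (hRle x hx) (norm_nonneg w)
      have h4 : (0:ℝ) < R' * ‖w‖ + 1 := by positivity
      rw [inv_mul_le_iff₀ h4]
      nlinarith [norm_nonneg w]
  · rintro r ⟨hr, hw⟩
    obtain ⟨q, hq, rfl⟩ := hw
    have h1 : ⟪p, r • q⟫ = r * ⟪q, p⟫ := by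
      rw [real_inner_smul_right, real_inner_comm]
    rw [h1]
    have := hq p hp
    nlinarith

theorem exists_gauge_lt {N : ℕ} (K : Set (EuclideanSpace ℝ (Fin N)))
    (hKconv : Convex ℝ K) (hKcl : IsClosed K) (h0 : (0 : EuclideanSpace ℝ (Fin N)) ∈ K)
    {q : EuclideanSpace ℝ (Fin N)} (hq : q ∉ K) :
    ∃ v, gauge (polarSet K) v < ⟪q, v⟫ := by
  obtain ⟨f, c, hfK, hfq⟩ := geometric_hahn_banach_closed_point hKconv hKcl hq
  set v := (InnerProductSpace.toDual ℝ (EuclideanSpace ℝ (Fin N))).symm f with hv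
  have hvf : ∀ x, ⟪v, x⟫ = f x := fun x => InnerProductSpace.toDual_symm_apply
  have hc : 0 < c := by have := hfK 0 h0; simpa using this
  refine ⟨v, lt_of_le_of_lt (b := c) ?_ ?_⟩
  · apply gauge_le_of_mem hc.le
    rw [Set.mem_smul_set_iff_inv_smul_mem₀ hc.ne']
    intro x hx
    rw [real_inner_smul_left, hvf]
    rw [inv_mul_le_iff₀ hc]; linarith [hfK x hx]
  · rw [real_inner_comm, hvf]; exact hfq

set_option maxHeartbeats 2000000 in
/-- for `Ω ⊂ ℝ^N` open bounded, `K` compact convex with `0 ∈ int K`, a Lipschitz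
function `u` on `Ω` satisfies `Du ∈ K` a.e. in `Ω` if and only if
`u(x) − u(y) ≤ ρ⁰(x − y)` for every `x, y ∈ Ω` joined by a segment contained in `Ω`,
where `ρ⁰` is the gauge of the polar set `K⁰`. -/
theorem lip_rho_characterization (N : ℕ) (Ω : Set (EuclideanSpace ℝ (Fin N)))
    (hΩopen : IsOpen Ω) (hΩbdd : Bornology.IsBounded Ω)
    (K : Set (EuclideanSpace ℝ (Fin N)))
    (hKcomp : IsCompact K) (hKconv : Convex ℝ K)
    (hK0 : (0 : EuclideanSpace ℝ (Fin N)) ∈ interior K)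
    (u : EuclideanSpace ℝ (Fin N) → ℝ) (C : ℝ≥0) (hu : LipschitzOnWith C u Ω) :
    (∀ᵐ x ∂(volume.restrict Ω), gradient u x ∈ K) ↔
      (∀ x ∈ Ω, ∀ y ∈ Ω, segment ℝ x y ⊆ Ω →
        u x - u y ≤ gauge (polarSet K) (x - y)) := by
  obtain ⟨w, hw, hEq⟩ := hu.extend_real
  constructor
  · intro h x hx y hy hseg
    rcases eq_or_ne x y with rfl | hxy
    · simp [gauge_zero]
    have hae : ∀ᵐ p : EuclideanSpace ℝ (Fin N), p ∈ Ω → gradient u p ∈ K :=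
      (ae_restrict_iff' hΩopen.measurableSet).mp h
    set M := gauge (polarSet K) (x - y) with hM
    have hM0 : 0 ≤ M := gauge_nonneg _
    have hsegC : IsCompact (segment ℝ x y) := by
      rw [segment_eq_image]; exact isCompact_Icc.image (by fun_prop)
    obtain ⟨δ, hδ, hthick⟩ := hsegC.exists_thickening_subset_open hΩopen hseg
    refine le_of_forall_pos_le_add (fun η hη => ?_)
    set ε := min δ (η / (2 * (C : ℝ) + 1)) with hε
    have hεpos : 0 < ε := lt_min hδ (by positivity)
    have hεδ : ε ≤ δ := min_le_left _ _
    set φ : ContDiffBump (0 : EuclideanSpace ℝ (Fin N)) :=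
      ⟨ε/2, ε, by positivity, half_lt_self hεpos⟩ with hφ
    set v : EuclideanSpace ℝ (Fin N) → ℝ := fun z => ∫ s, φ.normed volume s • w (z - s)
      with hvdef
    have hconv := fun z => conv_hasFDerivAt φ w C hw z
    have hφ0 : ∀ s : EuclideanSpace ℝ (Fin N), ε ≤ ‖s‖ → φ.normed volume s = 0 := by
      intro s hs
      by_contra h0
      have h1 : s ∈ Function.support (φ.normed volume) := h0
      rw [φ.support_normed_eq] at h1
      rw [Metric.mem_ball, dist_zero_right] at h1
      exact absurd h1 (not_lt.mpr hs)
    have hbound : ∀ z ∈ segment ℝ x y,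
        (∫ s, φ.normed volume s • fderiv ℝ w (z - s)) (x - y) ≤ M := by
      intro z hz
      rw [ContinuousLinearMap.integral_apply (hconv z).1]
      have haes : ∀ᵐ s : EuclideanSpace ℝ (Fin N), (z - s ∈ Ω → gradient u (z - s) ∈ K) :=
        (Measure.measurePreserving_sub_left volume z).quasiMeasurePreserving.ae hae
      have hptw : ∀ᵐ s : EuclideanSpace ℝ (Fin N),
          (φ.normed volume s • fderiv ℝ w (z - s)) (x - y) ≤ φ.normed volume s * M := by
        filter_upwards [haes] with s hs
        rcases le_or_gt ε ‖s‖ with hcase | hcase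
        · simp [hφ0 s hcase, mul_nonneg (φ.nonneg_normed s) hM0]
        · have hzs : z - s ∈ Ω := by
            apply hthick
            rw [Metric.mem_thickening_iff]
            refine ⟨z, hz, ?_⟩
            rw [dist_eq_norm]
            simpa using lt_of_lt_of_le hcase hεδ
          have hgrad := hs hzs
          rw [ContinuousLinearMap.smul_apply, smul_eq_mul]
          by_cases hd : DifferentiableAt ℝ w (z - s)
          · have hEqF : u =ᶠ[nhds (z - s)] w :=
              Filter.eventually_of_mem (hΩopen.mem_nhds hzs) (fun q hq => hEq hq)
            have hfd : fderiv ℝ w (z - s) = fderiv ℝ u (z - s) := (hEqF.fderiv_eq).symm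
            rw [hfd]
            have h2 : fderiv ℝ u (z - s) (x - y) = ⟪gradient u (z - s), x - y⟫ := by
              rw [gradient, InnerProductSpace.toDual_symm_apply]
            rw [h2]
            exact mul_le_mul_of_nonneg_left
              (inner_le_gauge_polar K hKcomp.isBounded hgrad (x - y)) (φ.nonneg_normed s)
          · rw [fderiv_zero_of_not_differentiableAt hd]
            simp [mul_nonneg (φ.nonneg_normed s) hM0]
      have hint1 : Integrable
          (fun s => (φ.normed volume s • fderiv ℝ w (z - s)) (x - y)) volume :=
        (ContinuousLinearMap.apply ℝ ℝ (x - y)).integrable_comp (hconv z).1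
      have hint2 : Integrable (fun s : EuclideanSpace ℝ (Fin N) => φ.normed volume s * M)
          volume := (φ.integrable_normed).mul_const M
      calc ∫ s, (φ.normed volume s • fderiv ℝ w (z - s)) (x - y)
          ≤ ∫ s, φ.normed volume s * M := integral_mono_ae hint1 hint2 hptw
        _ = M := by rw [integral_mul_const, φ.integral_normed, one_mul]
    set g : ℝ → ℝ := fun t => v (y + t • (x - y)) with hg
    have hgd : ∀ t : ℝ, HasDerivAt g
        ((∫ s, φ.normed volume s • fderiv ℝ w ((y + t • (x - y)) - s)) (x - y)) t := by
      intro t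
      have hline : HasDerivAt (fun t : ℝ => y + t • (x - y)) (x - y) t := by
        simpa using ((hasDerivAt_id t).smul_const (x - y)).const_add y
      exact ((hconv _).2).comp_hasDerivAt t hline
    have key : g 1 - g 0 ≤ M := by
      set h2 : ℝ → ℝ := fun t => M * t - g t with hh2
      have hd2 : ∀ t : ℝ, HasDerivAt h2
          (M - (∫ s, φ.normed volume s • fderiv ℝ w ((y + t • (x - y)) - s)) (x - y)) t := by
        intro t
        simpa [hh2, Pi.sub_def] using (((hasDerivAt_id t).const_mul M).sub (hgd t))
      have hmono : MonotoneOn h2 (Icc 0 1) := by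
        apply monotoneOn_of_deriv_nonneg (convex_Icc 0 1)
        · have hgc : Continuous g := by
            have hdiff : Differentiable ℝ g := fun t => (hgd t).differentiableAt
            exact hdiff.continuous
          exact ((continuous_const.mul continuous_id).sub hgc).continuousOn
        · intro t _
          exact ((hd2 t).differentiableAt).differentiableWithinAt
        · intro t ht
          rw [interior_Icc] at ht
          rw [(hd2 t).deriv]
          have hzseg : y + t • (x - y) ∈ segment ℝ x y := by
            rw [segment_symm, segment_eq_image']
            exact ⟨t, ⟨ht.1.le, ht.2.le⟩, rfl⟩
          linarith [hbound _ hzseg]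
      have h01 := hmono (left_mem_Icc.mpr zero_le_one) (right_mem_Icc.mpr zero_le_one) zero_le_one
      simp only [hh2, mul_one, mul_zero] at h01
      linarith
    have hclose : ∀ z ∈ Ω, |v z - u z| ≤ (C : ℝ) * ε := by
      intro z hz
      have h1 : Integrable (fun s => φ.normed volume s • w (z - s)) volume := by
        apply Continuous.integrable_of_hasCompactSupport
          ((φ.continuous_normed).smul (hw.continuous.comp (continuous_const.sub continuous_id)))
        exact φ.hasCompactSupport_normed.smul_right
      have h2 : Integrable (fun s : EuclideanSpace ℝ (Fin N) => φ.normed volume s • w z)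
          volume := (φ.integrable_normed).smul_const _
      have h3 : v z - u z = ∫ s, φ.normed volume s • (w (z - s) - w z) := by
        rw [hEq hz]
        have : ∫ s, φ.normed volume s • (w (z - s) - w z)
            = (∫ s, φ.normed volume s • w (z - s)) - ∫ s, φ.normed volume s • w z := by
          rw [← integral_sub h1 h2]
          congr 1; funext s; rw [smul_sub]
        rw [this, integral_smul_const, φ.integral_normed, one_smul]
      rw [h3, ← Real.norm_eq_abs]
      have h4 : ∀ s : EuclideanSpace ℝ (Fin N),
          ‖φ.normed volume s • (w (z - s) - w z)‖ ≤ ((C : ℝ) * ε) * φ.normed volume s := by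
        intro s
        rcases le_or_gt ε ‖s‖ with hcase | hcase
        · simp [hφ0 s hcase]
        · rw [norm_smul, Real.norm_eq_abs (φ.normed volume s),
            abs_of_nonneg (φ.nonneg_normed s), mul_comm]
          apply mul_le_mul_of_nonneg_right _ (φ.nonneg_normed s)
          have := hw.dist_le_mul (z - s) z
          rw [Real.dist_eq] at this
          calc ‖w (z - s) - w z‖ = |w (z - s) - w z| := Real.norm_eq_abs _
            _ ≤ (C : ℝ) * dist (z - s) z := this
            _ ≤ (C : ℝ) * ε := by
                apply mul_le_mul_of_nonneg_left _ C.coe_nonneg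
                rw [dist_eq_norm]
                simpa using hcase.le
      calc ‖∫ s, φ.normed volume s • (w (z - s) - w z)‖
          ≤ ∫ s, ((C : ℝ) * ε) * φ.normed volume s :=
            norm_integral_le_of_norm_le ((φ.integrable_normed).const_mul _)
              (Filter.Eventually.of_forall h4)
        _ = (C : ℝ) * ε := by rw [integral_const_mul, φ.integral_normed, mul_one]
    have e1 := hclose x hx
    have e2 := hclose y hy
    have hyx : y + (1:ℝ) • (x - y) = x := by rw [one_smul]; abel
    have hy0 : y + (0:ℝ) • (x - y) = y := by rw [zero_smul]; abel
    have hg1 : g 1 = v x := by show v (y + (1:ℝ) • (x - y)) = v x; rw [hyx]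
    have hg0 : g 0 = v y := by show v (y + (0:ℝ) • (x - y)) = v y; rw [hy0]
    have h2Cε : 2 * (C : ℝ) * ε ≤ η := by
      have h5 : ε ≤ η / (2 * (C : ℝ) + 1) := min_le_right _ _
      have h6 : (0:ℝ) < 2 * (C : ℝ) + 1 := by positivity
      rw [le_div_iff₀ h6] at h5
      nlinarith [C.coe_nonneg, hεpos]
    rw [hg1, hg0] at key
    have a1 := abs_le.mp e1
    have a2 := abs_le.mp e2
    linarith [a1.1, a1.2, a2.1, a2.2]
  · intro h
    rw [ae_restrict_iff' hΩopen.measurableSet]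
    filter_upwards [hw.ae_differentiableAt
      (μ := (volume : Measure (EuclideanSpace ℝ (Fin N))))] with p hdiff
    intro hpΩ
    have hEqF : u =ᶠ[nhds p] w :=
      Filter.eventually_of_mem (hΩopen.mem_nhds hpΩ) (fun q hq => hEq hq)
    have hdu : DifferentiableAt ℝ u p := hEqF.symm.differentiableAt_iff.mp hdiff
    by_contra hqK
    obtain ⟨v, hv⟩ := exists_gauge_lt K hKconv hKcomp.isClosed (interior_subset hK0) hqK
    have hline : HasDerivAt (fun t : ℝ => p + t • v) v 0 := by
      simpa using ((hasDerivAt_id (0:ℝ)).smul_const v).const_add p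
    have hd : HasDerivAt (fun t : ℝ => u (p + t • v)) (fderiv ℝ u p v) 0 := by
      have h00 : p + (0:ℝ) • v = p := by rw [zero_smul, add_zero]
      have h0 : HasFDerivAt u (fderiv ℝ u p) (p + (0:ℝ) • v) := by
        rw [h00]; exact hdu.hasFDerivAt
      exact h0.comp_hasDerivAt 0 hline
    have hsl : Filter.Tendsto (slope (fun t : ℝ => u (p + t • v)) 0)
        (nhdsWithin 0 (Set.Ioi 0)) (nhds (fderiv ℝ u p v)) :=
      (hasDerivAt_iff_tendsto_slope.mp hd).mono_left
        (nhdsWithin_mono 0 (fun t ht => Set.mem_compl_singleton_iff.mpr (ne_of_gt ht)))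
    obtain ⟨r, hr, hball⟩ := Metric.isOpen_iff.mp hΩopen p hpΩ
    have hev : ∀ᶠ t in nhdsWithin (0:ℝ) (Set.Ioi 0),
        slope (fun t : ℝ => u (p + t • v)) 0 t ≤ gauge (polarSet K) v := by
      filter_upwards [Ioo_mem_nhdsGT
        (show (0:ℝ) < r / (‖v‖ + 1) by positivity)] with t ht
      have htpos : 0 < t := ht.1
      have hmem : p + t • v ∈ Metric.ball p r := by
        rw [Metric.mem_ball, dist_eq_norm]
        have : ‖p + t • v - p‖ = t * ‖v‖ := by
          rw [add_sub_cancel_left, norm_smul, Real.norm_eq_abs, abs_of_pos htpos]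
        rw [this]
        calc t * ‖v‖ < (r / (‖v‖ + 1)) * (‖v‖ + 1) := by
              apply mul_lt_mul' ht.2.le _ (norm_nonneg v) (by positivity)
              linarith [norm_nonneg v]
          _ = r := by field_simp
      have hsegsub : segment ℝ (p + t • v) p ⊆ Ω := by
        rw [segment_symm]
        exact ((convex_ball p r).segment_subset (Metric.mem_ball_self hr) hmem).trans hball
      have h2 := h (p + t • v) (hball hmem) p hpΩ hsegsub
      rw [add_sub_cancel_left, gauge_smul_of_nonneg htpos.le, smul_eq_mul] at h2
      rw [slope_def_field]
      simp only [sub_zero, zero_smul, add_zero]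
      rw [div_le_iff₀ htpos]
      linarith
    have hle : fderiv ℝ u p v ≤ gauge (polarSet K) v := le_of_tendsto hsl hev
    have hqv : ⟪gradient u p, v⟫ = fderiv ℝ u p v := by
      rw [gradient, InnerProductSpace.toDual_symm_apply]
    linarith [hv, hqv ▸ hle]
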